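/- Let $b > 1/2$ and $m \in \mathbb{Z}$, and define $f(t) = \vartheta_3(\pi t + 2\pi b m, ib)$ and $g(t) = \vartheta_3(\pi t, ib)$, where $\vartheta_3(z, ib) = \sum_{k \in \mathbb{Z}} e^{-\pi b k^2} e^{2izk}$. Then $\sup_{t \in \mathbb{R}} |f(t) - g(t)| \leq 8\pi |m| (b - \tfrac{1}{2}) \sum_{k=1}^{\infty} k e^{-\pi b k^2}$. -/

import Mathlib

open Complex

lemma norm_exp_real_mul_I_sub_one_le (θ : ℝ) : ‖Complex.exp (θ * I) - 1‖ ≤ |θ| := by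
  have h2 : ‖Complex.exp ((θ:ℂ) * I) - 1‖^2 = (Real.cos θ - 1)^2 + (Real.sin θ)^2 := by
    rw [Complex.sq_norm, Complex.normSq_apply]
    simp [Complex.exp_ofReal_mul_I_re, Complex.exp_ofReal_mul_I_im]
    ring
  have hc := Real.cos_two_mul (θ/2)
  have hp := Real.sin_sq_add_cos_sq (θ/2)
  have hp2 := Real.sin_sq_add_cos_sq θ
  have hs : |Real.sin (θ/2)| ≤ |θ/2| := Real.abs_sin_le_abs
  have hs2 : Real.sin (θ/2)^2 ≤ (θ/2)^2 := by
    rw [← _root_.sq_abs, ← _root_.sq_abs (θ/2)]; exact pow_le_pow_left₀ (abs_nonneg _) hs 2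
  have h3 : ‖Complex.exp ((θ:ℂ) * I) - 1‖^2 ≤ |θ|^2 := by
    rw [h2, _root_.sq_abs]
    have hθ : 2 * (θ/2) = θ := by ring
    rw [hθ] at hc
    nlinarith [hs2]
  nlinarith [norm_nonneg (Complex.exp ((θ:ℂ) * I) - 1), abs_nonneg θ]

lemma exp_sq_le_geo (b : ℝ) (hb : 0 < b) (n : ℕ) :
    Real.exp (-Real.pi * b * (n : ℝ)^2) ≤ Real.exp (-(Real.pi * b)) ^ n := by
  have h1 : Real.exp (-Real.pi * b * (n : ℝ)^2) = Real.exp (-(Real.pi * b)) ^ (n^2) := by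
    rw [← Real.exp_nat_mul]; push_cast; ring_nf
  rw [h1]
  refine pow_le_pow_of_le_one (Real.exp_pos _).le ?_ (Nat.le_self_pow two_ne_zero n)
  rw [Real.exp_le_one_iff]
  nlinarith [Real.pi_pos]

lemma geo_lt_one (b : ℝ) (hb : 0 < b) : Real.exp (-(Real.pi * b)) < 1 := by
  rw [Real.exp_lt_one_iff]
  nlinarith [Real.pi_pos]

lemma summable_nat_exp (b : ℝ) (hb : 0 < b) :
    Summable (fun n : ℕ => Real.exp (-Real.pi * b * (n : ℝ)^2)) := by
  apply Summable.of_nonneg_of_le (fun n => (Real.exp_pos _).le) (exp_sq_le_geo b hb)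
  exact summable_geometric_of_lt_one (Real.exp_pos _).le (geo_lt_one b hb)

lemma summable_nat_mul_exp (b : ℝ) (hb : 0 < b) :
    Summable (fun n : ℕ => (n : ℝ) * Real.exp (-Real.pi * b * (n : ℝ)^2)) := by
  apply Summable.of_nonneg_of_le (fun n => by positivity)
    (fun n => mul_le_mul_of_nonneg_left (exp_sq_le_geo b hb n) (Nat.cast_nonneg n))
  simpa using summable_pow_mul_geometric_of_norm_lt_one 1
    (r := Real.exp (-(Real.pi * b)))
    (by rw [Real.norm_eq_abs, abs_of_pos (Real.exp_pos _)]; exact geo_lt_one b hb)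

lemma summable_int_exp (b : ℝ) (hb : 0 < b) :
    Summable (fun k : ℤ => Real.exp (-Real.pi * b * (k : ℝ)^2)) := by
  apply Summable.of_nat_of_neg <;> simpa using summable_nat_exp b hb

lemma hasSum_int_abs_mul_exp (b : ℝ) (hb : 0 < b) :
    HasSum (fun k : ℤ => |(k : ℝ)| * Real.exp (-Real.pi * b * (k : ℝ)^2))
      (2 * ∑' k : ℕ, ((k : ℝ) + 1) * Real.exp (-Real.pi * b * ((k : ℝ) + 1)^2)) := by
  set S := ∑' k : ℕ, ((k : ℝ) + 1) * Real.exp (-Real.pi * b * ((k : ℝ) + 1)^2) with hSdef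
  set F : ℕ → ℝ := fun n => |(n : ℝ)| * Real.exp (-Real.pi * b * (n : ℝ)^2) with hF
  have hsum : Summable (fun n : ℕ => ((n : ℝ) + 1) * Real.exp (-Real.pi * b * ((n : ℝ) + 1)^2)) := by
    have := (summable_nat_add_iff 1).mpr (summable_nat_mul_exp b hb)
    simpa [Nat.cast_add] using this
  have hS : HasSum (fun n : ℕ => ((n : ℝ) + 1) * Real.exp (-Real.pi * b * ((n : ℝ) + 1)^2)) S :=
    hsum.hasSum
  have hshift : HasSum (fun n : ℕ => F (n + 1)) S := by
    convert hS using 2 with n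
    simp only [hF]
    push_cast
    rw [_root_.abs_of_nonneg (by positivity : (0:ℝ) ≤ (n:ℝ) + 1)]
  have h1 : HasSum F (S + ∑ i ∈ Finset.range 1, F i) := (hasSum_nat_add_iff 1).mp hshift
  have hF0 : F 0 = 0 := by simp [hF]
  rw [Finset.sum_range_one, hF0, add_zero] at h1
  have h1' : HasSum (fun n : ℕ => |((n : ℤ) : ℝ)| * Real.exp (-Real.pi * b * ((n : ℤ) : ℝ)^2)) S := by
    convert h1 using 2 with n
    simp only [hF, Int.cast_natCast]
  have h2 : HasSum (fun n : ℕ => |((-((n : ℤ) + 1) : ℤ) : ℝ)| * Real.exp (-Real.pi * b * ((-((n : ℤ) + 1) : ℤ) : ℝ)^2)) S := by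
    convert hS using 2 with n
    push_cast
    rw [neg_sq, abs_neg, _root_.abs_of_nonneg (by positivity : (0:ℝ) ≤ (n:ℝ) + 1)]
  have := HasSum.of_nat_of_neg_add_one (f := fun k : ℤ => |(k : ℝ)| * Real.exp (-Real.pi * b * (k : ℝ)^2)) h1' h2
  rw [two_mul]
  exact this

open Complex in
theorem theta3_shift_bound (b : ℝ) (hb : 1/2 < b) (m : ℤ) (t : ℝ) :
    ‖(∑' k : ℤ, (Real.exp (-Real.pi * b * (k : ℝ)^2) : ℂ)
          * Complex.exp (2 * I * (Real.pi * t + 2 * Real.pi * b * m) * k))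
      - ∑' k : ℤ, (Real.exp (-Real.pi * b * (k : ℝ)^2) : ℂ)
          * Complex.exp (2 * I * (Real.pi * t) * k)‖
    ≤ 8 * Real.pi * |(m : ℝ)| * (b - 1/2)
        * ∑' k : ℕ, ((k : ℝ) + 1) * Real.exp (-Real.pi * b * ((k : ℝ) + 1)^2) := by
  have hb0 : 0 < b := by linarith
  have hcast1 : ((Real.pi * t + 2 * Real.pi * b * m : ℝ) : ℂ)
      = (Real.pi : ℂ) * t + 2 * Real.pi * b * m := by push_cast; ring
  have hcast2 : ((Real.pi * t : ℝ) : ℂ) = (Real.pi : ℂ) * t := by push_cast; ring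
  rw [← hcast1, ← hcast2]
  have hnorm : ∀ (x : ℝ) (k : ℤ), ‖Complex.exp (2 * I * (x : ℂ) * k)‖ = 1 := by
    intro x k
    rw [Complex.norm_exp]
    norm_num [Complex.mul_re, Complex.mul_im]
  have hsummableC : ∀ x : ℝ, Summable (fun k : ℤ =>
      (Real.exp (-Real.pi * b * (k : ℝ)^2) : ℂ) * Complex.exp (2 * I * (x : ℂ) * k)) := by
    intro x
    apply Summable.of_norm
    simp only [norm_mul, hnorm x, mul_one, Complex.norm_real, Real.norm_eq_abs,
      abs_of_pos (Real.exp_pos _)]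
    exact summable_int_exp b hb0
  rw [← Summable.tsum_sub (hsummableC (Real.pi * t + 2 * Real.pi * b * m)) (hsummableC (Real.pi * t))]
  have hW := (hasSum_int_abs_mul_exp b hb0).mul_left (4 * Real.pi * |(m : ℝ)| * (b - 1/2))
  have hbound : ∀ k : ℤ,
      ‖(Real.exp (-Real.pi * b * (k : ℝ)^2) : ℂ)
          * Complex.exp (2 * I * ((Real.pi * t + 2 * Real.pi * b * m : ℝ) : ℂ) * k)
        - (Real.exp (-Real.pi * b * (k : ℝ)^2) : ℂ)
          * Complex.exp (2 * I * ((Real.pi * t : ℝ) : ℂ) * k)‖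
      ≤ 4 * Real.pi * |(m : ℝ)| * (b - 1/2)
          * (|(k : ℝ)| * Real.exp (-Real.pi * b * (k : ℝ)^2)) := by
    intro k
    have key : Complex.exp (2 * I * ((Real.pi * t + 2 * Real.pi * b * m : ℝ) : ℂ) * k)
        = Complex.exp (2 * I * ((Real.pi * t : ℝ) : ℂ) * k)
          * Complex.exp ((4 * Real.pi * (b - 1/2) * m * k : ℝ) * I) := by
      rw [← Complex.exp_add]
      rw [show Complex.exp (2 * I * ((Real.pi * t + 2 * Real.pi * b * m : ℝ) : ℂ) * k)
          = Complex.exp (2 * I * ((Real.pi * t : ℝ) : ℂ) * k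
            + ((4 * Real.pi * (b - 1/2) * m * k : ℝ) * I) + (m * k : ℤ) * (2 * Real.pi * I)) by
        congr 1; push_cast; ring]
      rw [Complex.exp_add, Complex.exp_int_mul_two_pi_mul_I, mul_one]
    rw [← mul_sub, key, ← mul_sub_one, ← mul_assoc, norm_mul, norm_mul, hnorm,
      mul_one, Complex.norm_real, Real.norm_eq_abs, _root_.abs_of_pos (Real.exp_pos _)]
    calc Real.exp (-Real.pi * b * (k : ℝ)^2)
          * ‖Complex.exp (((4 * Real.pi * (b - 1/2) * m * k : ℝ) : ℂ) * I) - 1‖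
        ≤ Real.exp (-Real.pi * b * (k : ℝ)^2) * |4 * Real.pi * (b - 1/2) * (m : ℝ) * (k : ℝ)| :=
          mul_le_mul_of_nonneg_left (norm_exp_real_mul_I_sub_one_le _) (Real.exp_pos _).le
      _ = 4 * Real.pi * |(m : ℝ)| * (b - 1/2)
          * (|(k : ℝ)| * Real.exp (-Real.pi * b * (k : ℝ)^2)) := by
          rw [abs_mul, abs_mul, abs_mul,
            _root_.abs_of_nonneg (by positivity : (0:ℝ) ≤ 4 * Real.pi),
            _root_.abs_of_nonneg (by linarith : (0:ℝ) ≤ b - 1/2)]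
          ring
  have hfinal := tsum_of_norm_bounded hW hbound
  refine le_trans hfinal (le_of_eq ?_)
  ring
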